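/- Define the Laurent polynomials φ(t) = (t−1)^{4m} t^{1−2m} and ψ(t) = (t−1)^{2m}(t+1) t^{−m} for an integer m ≥ 1. Then the map t ↦ (ψ(t)·φ(t)^n, φ(t)) from ℂ* to ℂ² is injective for every integer n ≥ 0. -/

import Mathlib

/-- series (o) of the Main Theorem: with
`φ(t) = (t−1)^{4m} t^{1−2m}` and `ψ(t) = (t−1)^{2m}(t+1) t^{−m}`, `m ≥ 1`, the map
`t ↦ (ψ(t)·φ(t)^n, φ(t))` is injective on `ℂ*` for every `n ≥ 0`. -/
theorem series_o_injective (m : ℕ) (hm : 1 ≤ m) (n : ℕ) :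
    Set.InjOn
      (fun t : ℂ =>
        (((t - 1) ^ (2 * m) * (t + 1) * t ^ (-(m : ℤ))) *
            ((t - 1) ^ (4 * m) * t ^ ((1 : ℤ) - 2 * m)) ^ n,
         (t - 1) ^ (4 * m) * t ^ ((1 : ℤ) - 2 * m)))
      {t : ℂ | t ≠ 0} := by
  obtain ⟨k, rfl⟩ : ∃ k, m = k + 1 := ⟨m - 1, by omega⟩
  intro s hs t ht h
  simp only [Set.mem_setOf_eq] at hs ht
  simp only [Prod.mk.injEq] at h
  obtain ⟨h1, h2⟩ := h
  have e1 : ∀ x : ℂ, x ^ ((1:ℤ) - 2*((k+1:ℕ):ℤ)) = (x ^ (2*k+1))⁻¹ := by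
    intro x
    rw [show (1:ℤ) - 2*((k+1:ℕ):ℤ) = -((2*k+1 : ℕ):ℤ) by push_cast; ring, zpow_neg,
      zpow_natCast]
  have e2 : ∀ x : ℂ, x ^ (-((k+1:ℕ):ℤ)) = (x ^ (k+1))⁻¹ := by
    intro x; rw [zpow_neg, zpow_natCast]
  simp only [e1, e2] at h1 h2
  rw [h2] at h1
  by_cases hφ : (t - 1) ^ (4*(k+1)) * (t ^ (2*k+1))⁻¹ = 0
  · have ht1 : t = 1 := by
      rcases mul_eq_zero.1 hφ with h' | h'
      · exact sub_eq_zero.1 (pow_eq_zero_iff (n := 4*(k+1)) (by omega) |>.1 h')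
      · exact absurd h' (inv_ne_zero (pow_ne_zero _ ht))
    have hφs : (s - 1) ^ (4*(k+1)) * (s ^ (2*k+1))⁻¹ = 0 := h2.trans hφ
    have hs1 : s = 1 := by
      rcases mul_eq_zero.1 hφs with h' | h'
      · exact sub_eq_zero.1 (pow_eq_zero_iff (n := 4*(k+1)) (by omega) |>.1 h')
      · exact absurd h' (inv_ne_zero (pow_ne_zero _ hs))
    rw [hs1, ht1]
  · have hψ : (s - 1) ^ (2*(k+1)) * (s + 1) * (s ^ (k+1))⁻¹
        = (t - 1) ^ (2*(k+1)) * (t + 1) * (t ^ (k+1))⁻¹ :=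
      mul_right_cancel₀ (pow_ne_zero n hφ) h1
    have ht1 : t ≠ 1 := by
      intro h'
      apply hφ
      rw [h']
      simp
    have hP1 : (s-1)^(4*(k+1)) * t^(2*k+1) = (t-1)^(4*(k+1)) * s^(2*k+1) := by
      field_simp at h2
      linear_combination h2
    have hP2 : (s-1)^(2*(k+1)) * (s+1) * t^(k+1) = (t-1)^(2*(k+1)) * (t+1) * s^(k+1) := by
      field_simp at hψ
      linear_combination hψ
    have key : (s - t) * (s*t - 1) = 0 := by
      have h0 : (s - t) * (s*t - 1) * ((t-1)^(4*(k+1)) * s^(2*k+1)) = 0 := by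
        linear_combination ((s-1)^(2*(k+1))*(s+1)*t^(k+1) + (t-1)^(2*(k+1))*(t+1)*s^(k+1)) * hP2
          - t*(s+1)^2 * hP1
      have h4 : (t-1)^(4*(k+1)) * s^(2*k+1) ≠ 0 :=
        mul_ne_zero (pow_ne_zero _ (sub_ne_zero.2 ht1)) (pow_ne_zero _ hs)
      exact (mul_eq_zero.1 h0).resolve_right h4
    rcases mul_eq_zero.1 key with h' | h'
    · exact sub_eq_zero.1 h'
    · have hst : s = t⁻¹ := eq_inv_of_mul_eq_one_left (by linear_combination h')
      subst hst
      have ht2 : (t - 1) * (t + 1) = 0 := by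
        have h5 : (t-1)^(4*(k+1)) * t^(4*k+2) * ((t-1)*(t+1)) = 0 := by
          field_simp at hP1
          rw [div_pow, one_div_pow] at hP1
          field_simp at hP1
          have hrw : (1-t:ℂ)^(4*(k+1)) = (t-1)^(4*(k+1)) := by
            rw [show (1-t:ℂ) = -(t-1) by ring, Even.neg_pow ⟨2*(k+1), by ring⟩]
          rw [hrw] at hP1
          linear_combination -hP1
        have h6 : (t-1)^(4*(k+1)) * t^(4*k+2) ≠ 0 :=
          mul_ne_zero (pow_ne_zero _ (sub_ne_zero.2 ht1)) (pow_ne_zero _ ht)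
        exact (mul_eq_zero.1 h5).resolve_left h6
      have htm : t = -1 := by
        rcases mul_eq_zero.1 ht2 with h'' | h''
        · exact absurd (sub_eq_zero.1 h'') ht1
        · linear_combination h''
      rw [htm]
      norm_num
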